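/- The 2-Wasserstein distance squared between Gaussian mixtures is bounded above by the optimal value of the following linear program over component couplings: W₂²(∑_i α₀ⁱ N(m₀ⁱ, Σ₀ⁱ), ∑_j α₁ʲ N(m₁ʲ, Σ₁ʲ)) ≤ ∑_{i,j} λ_{ij} W₂²(N(m₀ⁱ, Σ₀ⁱ), N(m₁ʲ, Σ₁ʲ)) for any λ_{ij} ≥ 0 with row sums α₀ⁱ and column sums α₁ʲ, where W₂² between probability measures ρ₀, ρ₁ is defined as the infimum over couplings π of ∫ ‖x−y‖² dπ. (It suffices to prove the more abstract statement: for any families of probability measures μᵢ, νⱼ with finite second moments, W₂²(∑ α₀ⁱ μᵢ, ∑ α₁ʲ νⱼ) ≤ ∑_{ij} λ_{ij} W₂²(μᵢ, νⱼ).) -/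

import Mathlib

open MeasureTheory

/-- Squared 2-Wasserstein "distance": infimum over couplings of the expected
squared distance. -/
noncomputable def W2sq {d : ℕ} (ρ₀ ρ₁ : Measure (EuclideanSpace ℝ (Fin d))) : ℝ :=
  sInf { r : ℝ | ∃ π : Measure (EuclideanSpace ℝ (Fin d) × EuclideanSpace ℝ (Fin d)),
    IsProbabilityMeasure π ∧ π.map Prod.fst = ρ₀ ∧ π.map Prod.snd = ρ₁ ∧
    r = ∫ p, ‖p.1 - p.2‖ ^ 2 ∂π }

private lemma map_finset_sum' {α β ι : Type*} [MeasurableSpace α] [MeasurableSpace β]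
    {f : α → β} (hf : Measurable f) (s : Finset ι) (μ : ι → Measure α) :
    (∑ i ∈ s, μ i).map f = ∑ i ∈ s, (μ i).map f := by
  classical
  induction s using Finset.induction_on with
  | empty => simp
  | insert _ _ h ih =>
      rw [Finset.sum_insert h, Finset.sum_insert h, Measure.map_add _ _ hf, ih]

private lemma cost_cont {d : ℕ} :
    Continuous fun p : EuclideanSpace ℝ (Fin d) × EuclideanSpace ℝ (Fin d) =>
      ‖p.1 - p.2‖ ^ 2 := by fun_prop

private lemma cost_integrable {d : ℕ}
    {π : Measure (EuclideanSpace ℝ (Fin d) × EuclideanSpace ℝ (Fin d))}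
    {ρ₀ ρ₁ : Measure (EuclideanSpace ℝ (Fin d))}
    (h0 : π.map Prod.fst = ρ₀) (h1 : π.map Prod.snd = ρ₁)
    (hρ₀ : Integrable (fun x => ‖x‖ ^ 2) ρ₀) (hρ₁ : Integrable (fun x => ‖x‖ ^ 2) ρ₁) :
    Integrable (fun p => ‖p.1 - p.2‖ ^ 2) π := by
  have hfst : Integrable (fun p : EuclideanSpace ℝ (Fin d) × EuclideanSpace ℝ (Fin d) =>
      ‖p.1‖ ^ 2) π := by
    have := (integrable_map_measure (f := Prod.fst) (g := fun x => ‖x‖ ^ 2)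
      (by exact (continuous_norm.pow 2).aestronglyMeasurable)
      measurable_fst.aemeasurable).mp (h0 ▸ hρ₀)
    exact this
  have hsnd : Integrable (fun p : EuclideanSpace ℝ (Fin d) × EuclideanSpace ℝ (Fin d) =>
      ‖p.2‖ ^ 2) π := by
    have := (integrable_map_measure (f := Prod.snd) (g := fun x => ‖x‖ ^ 2)
      (by exact (continuous_norm.pow 2).aestronglyMeasurable)
      measurable_snd.aemeasurable).mp (h1 ▸ hρ₁)
    exact this
  refine Integrable.mono' ((hfst.add hsnd).const_mul 2)
    cost_cont.aestronglyMeasurable (Filter.Eventually.of_forall fun p => ?_)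
  have h1 : ‖p.1 - p.2‖ ≤ ‖p.1‖ + ‖p.2‖ := norm_sub_le _ _
  have h2 : (0:ℝ) ≤ ‖p.1 - p.2‖ := norm_nonneg _
  rw [Real.norm_of_nonneg (by positivity)]
  simp only [Pi.add_apply]
  nlinarith [norm_nonneg p.1, norm_nonneg p.2, sq_nonneg (‖p.1‖ - ‖p.2‖)]

theorem stmt_5 (N₀ N₁ d : ℕ)
    (μ : Fin N₀ → Measure (EuclideanSpace ℝ (Fin d)))
    (ν : Fin N₁ → Measure (EuclideanSpace ℝ (Fin d)))
    (hμ : ∀ i, IsProbabilityMeasure (μ i)) (hν : ∀ j, IsProbabilityMeasure (ν j))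
    (hμ2 : ∀ i, Integrable (fun x => ‖x‖ ^ 2) (μ i))
    (hν2 : ∀ j, Integrable (fun x => ‖x‖ ^ 2) (ν j))
    (lam : Fin N₀ × Fin N₁ → ℝ) (hlam : ∀ p, 0 ≤ lam p)
    (α₀ : Fin N₀ → ℝ) (α₁ : Fin N₁ → ℝ)
    (hrow : ∀ i, ∑ j, lam (i, j) = α₀ i)
    (hcol : ∀ j, ∑ i, lam (i, j) = α₁ j)
    (hα₀ : ∑ i, α₀ i = 1) :
    W2sq (∑ i, ENNReal.ofReal (α₀ i) • μ i) (∑ j, ENNReal.ofReal (α₁ j) • ν j)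
      ≤ ∑ p : Fin N₀ × Fin N₁, lam p * W2sq (μ p.1) (ν p.2) := by
  classical
  have hlamsum : ∑ p : Fin N₀ × Fin N₁, lam p = 1 := by
    rw [← hα₀, Fintype.sum_prod_type]
    exact Finset.sum_congr rfl fun i _ => hrow i
  refine le_of_forall_pos_le_add fun ε hε => ?_
  -- For each pair, choose a near-optimal coupling.
  have key : ∀ p : Fin N₀ × Fin N₁,
      ∃ π : Measure (EuclideanSpace ℝ (Fin d) × EuclideanSpace ℝ (Fin d)),
        IsProbabilityMeasure π ∧ π.map Prod.fst = μ p.1 ∧ π.map Prod.snd = ν p.2 ∧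
        (∫ q, ‖q.1 - q.2‖ ^ 2 ∂π) < W2sq (μ p.1) (ν p.2) + ε := by
    intro p
    have hne : { r : ℝ | ∃ π : Measure (EuclideanSpace ℝ (Fin d) × EuclideanSpace ℝ (Fin d)),
        IsProbabilityMeasure π ∧ π.map Prod.fst = μ p.1 ∧ π.map Prod.snd = ν p.2 ∧
        r = ∫ q, ‖q.1 - q.2‖ ^ 2 ∂π }.Nonempty := by
      refine ⟨∫ q, ‖q.1 - q.2‖ ^ 2 ∂((μ p.1).prod (ν p.2)), (μ p.1).prod (ν p.2), ?_, ?_, ?_, rfl⟩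
      · have := hμ p.1; have := hν p.2; infer_instance
      · have := hν p.2
        rw [Measure.map_fst_prod, measure_univ, one_smul]
      · have := hμ p.1
        rw [Measure.map_snd_prod, measure_univ, one_smul]
    obtain ⟨r, ⟨π, hπ, h0, h1, hr⟩, hlt⟩ := Real.lt_sInf_add_pos hne hε
    exact ⟨π, hπ, h0, h1, by rw [← hr]; exact hlt⟩
  choose π hπprob hπ0 hπ1 hπcost using key
  set πm : Measure (EuclideanSpace ℝ (Fin d) × EuclideanSpace ℝ (Fin d)) :=
    ∑ p : Fin N₀ × Fin N₁, ENNReal.ofReal (lam p) • π p with hπm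
  have hint : ∀ p : Fin N₀ × Fin N₁,
      Integrable (fun q => ‖q.1 - q.2‖ ^ 2) (π p) := fun p =>
    cost_integrable (hπ0 p) (hπ1 p) (hμ2 p.1) (hν2 p.2)
  have hπmprob : IsProbabilityMeasure πm := by
    constructor
    rw [hπm, Measure.finset_sum_apply]
    have : ∀ p : Fin N₀ × Fin N₁, (ENNReal.ofReal (lam p) • π p) Set.univ
        = ENNReal.ofReal (lam p) := by
      intro p
      have := hπprob p
      simp [Measure.smul_apply, measure_univ]
    rw [Finset.sum_congr rfl fun p _ => this p,
      ← ENNReal.ofReal_sum_of_nonneg fun p _ => hlam p, hlamsum, ENNReal.ofReal_one]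
  have hmarg0 : πm.map Prod.fst = ∑ i, ENNReal.ofReal (α₀ i) • μ i := by
    rw [hπm, map_finset_sum' measurable_fst]
    have : ∀ p : Fin N₀ × Fin N₁, (ENNReal.ofReal (lam p) • π p).map Prod.fst
        = ENNReal.ofReal (lam p) • μ p.1 := fun p => by
      rw [Measure.map_smul, hπ0 p]
    rw [Finset.sum_congr rfl fun p _ => this p,
      Fintype.sum_prod_type (f := fun p => ENNReal.ofReal (lam p) • μ p.1)]
    refine Finset.sum_congr rfl fun i _ => ?_
    rw [← hrow i, ENNReal.ofReal_sum_of_nonneg fun j _ => hlam (i, j), Finset.sum_smul]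
  have hmarg1 : πm.map Prod.snd = ∑ j, ENNReal.ofReal (α₁ j) • ν j := by
    rw [hπm, map_finset_sum' measurable_snd]
    have : ∀ p : Fin N₀ × Fin N₁, (ENNReal.ofReal (lam p) • π p).map Prod.snd
        = ENNReal.ofReal (lam p) • ν p.2 := fun p => by
      rw [Measure.map_smul, hπ1 p]
    rw [Finset.sum_congr rfl fun p _ => this p,
      Fintype.sum_prod_type_right (f := fun p => ENNReal.ofReal (lam p) • ν p.2)]
    refine Finset.sum_congr rfl fun j _ => ?_
    rw [← hcol j, ENNReal.ofReal_sum_of_nonneg fun i _ => hlam (i, j), Finset.sum_smul]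
  have hcostπm : (∫ q, ‖q.1 - q.2‖ ^ 2 ∂πm)
      = ∑ p : Fin N₀ × Fin N₁, lam p * ∫ q, ‖q.1 - q.2‖ ^ 2 ∂(π p) := by
    rw [hπm, integral_finset_sum_measure fun p _ =>
      (hint p).smul_measure ENNReal.ofReal_ne_top]
    refine Finset.sum_congr rfl fun p _ => ?_
    rw [integral_smul_measure, ENNReal.toReal_ofReal (hlam p), smul_eq_mul]
  -- W2sq of mixtures ≤ cost of πm
  have hbdd : BddBelow { r : ℝ | ∃ π' : Measure (EuclideanSpace ℝ (Fin d) ×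
      EuclideanSpace ℝ (Fin d)),
      IsProbabilityMeasure π' ∧ π'.map Prod.fst = ∑ i, ENNReal.ofReal (α₀ i) • μ i ∧
      π'.map Prod.snd = ∑ j, ENNReal.ofReal (α₁ j) • ν j ∧
      r = ∫ q, ‖q.1 - q.2‖ ^ 2 ∂π' } := by
    refine ⟨0, fun r hr => ?_⟩
    obtain ⟨π', _, _, _, hr⟩ := hr
    rw [hr]
    exact integral_nonneg fun q => by positivity
  have hle : W2sq (∑ i, ENNReal.ofReal (α₀ i) • μ i) (∑ j, ENNReal.ofReal (α₁ j) • ν j)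
      ≤ ∫ q, ‖q.1 - q.2‖ ^ 2 ∂πm :=
    csInf_le hbdd ⟨πm, hπmprob, hmarg0, hmarg1, rfl⟩
  calc W2sq (∑ i, ENNReal.ofReal (α₀ i) • μ i) (∑ j, ENNReal.ofReal (α₁ j) • ν j)
      ≤ ∑ p : Fin N₀ × Fin N₁, lam p * ∫ q, ‖q.1 - q.2‖ ^ 2 ∂(π p) := hcostπm ▸ hle
    _ ≤ ∑ p : Fin N₀ × Fin N₁, lam p * (W2sq (μ p.1) (ν p.2) + ε) :=
        Finset.sum_le_sum fun p _ =>
          mul_le_mul_of_nonneg_left (le_of_lt (hπcost p)) (hlam p)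
    _ = (∑ p : Fin N₀ × Fin N₁, lam p * W2sq (μ p.1) (ν p.2)) + ε := by
        simp [mul_add, Finset.sum_add_distrib, ← Finset.sum_mul, hlamsum]
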